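/- Let k ≥ 4 be an even integer and let X_1, …, X_n be k-wise independent random variables taking values in [0,1]. Let X = X_1 + … + X_n and let μ be a real number with μ ≤ E[X] and μ ≥ k. Then for every ε > 0, Pr[|X − E[X]| ≥ ε·E[X]] ≤ 8·(2k/(ε²·μ))^{k/2}. -/

import Mathlib

open MeasureTheory ProbabilityTheory

/-- A finite family of random variables is `k`-wise independent if every subfamily of at most
`k` of them is mutually independent. -/
def KWiseIndepFun {Ω ι β : Type*} [MeasurableSpace Ω] [MeasurableSpace β]
    (k : ℕ) (X : ι → Ω → β) (P : Measure Ω) : Prop :=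
  ∀ S : Finset ι, S.card ≤ k →
    iIndepFun (fun i : S => X i) P

open Finset

lemma centralBinom_le_four_pow (r : ℕ) : (2*r).choose r ≤ 4 ^ r := by
  calc (2*r).choose r ≤ ∑ m ∈ Finset.range (2*r+1), (2*r).choose m :=
        Finset.single_le_sum (fun i _ => Nat.zero_le _)
          (Finset.mem_range.2 (by omega))
    _ = 2 ^ (2*r) := Nat.sum_range_choose (2*r)
    _ = 4 ^ r := by rw [pow_mul]; norm_num

lemma pow_self_le_four_pow_mul_factorial (r : ℕ) : r ^ r ≤ 4 ^ r * r.factorial := by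
  have h1 : r ^ r * r.factorial ≤ (2*r).factorial := by
    calc r ^ r * r.factorial ≤ (r+1) ^ r * r.factorial := by
          exact Nat.mul_le_mul_right _ (Nat.pow_le_pow_left (Nat.le_succ r) r)
      _ = r.factorial * (r+1) ^ r := Nat.mul_comm _ _
      _ ≤ (r + r).factorial := Nat.factorial_mul_pow_le_factorial
      _ = (2*r).factorial := by ring_nf
  have h2 : (2*r).factorial = (2*r).choose r * r.factorial * r.factorial := by
    have := Nat.choose_mul_factorial_mul_factorial (show r ≤ 2*r by omega)
    rw [show 2*r - r = r by omega] at this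
    omega
  have h3 : r ^ r * r.factorial ≤ 4 ^ r * r.factorial * r.factorial := by
    calc r ^ r * r.factorial ≤ (2*r).factorial := h1
      _ = (2*r).choose r * r.factorial * r.factorial := h2
      _ ≤ 4 ^ r * r.factorial * r.factorial :=
          Nat.mul_le_mul_right _ (Nat.mul_le_mul_right _ (centralBinom_le_four_pow r))
  have hf : 0 < r.factorial := Nat.factorial_pos r
  exact Nat.le_of_mul_le_mul_right h3 hf

lemma term_bound (m r : ℕ) (hr1 : 1 ≤ r) (hrm : r ≤ m) (E V : ℝ)
    (hV0 : 0 ≤ V) (hVE : V ≤ E) (hE : (2*m : ℝ) ≤ E) :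
    (r:ℝ)^(2*m) / r.factorial * V ^ r ≤ (4*m*E)^m * 2^r / 2^m := by
  have hm0 : 0 < m := lt_of_lt_of_le hr1 hrm
  have hE0 : (0:ℝ) ≤ E := le_trans (by positivity) hE
  rw [div_mul_eq_mul_div, div_le_div_iff₀ (by positivity) (by positivity)]
  -- goal : r^(2m) * V^r * 2^m ≤ (4mE)^m * 2^r * r!
  have key1 : (r:ℝ)^(2*m) ≤ (4:ℝ)^r * r.factorial * (m:ℝ)^(2*m - r) := by
    have h1 : (r:ℝ)^(2*m) = (r:ℝ)^r * (r:ℝ)^(2*m - r) := by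
      rw [← pow_add]; congr 1; omega
    have h2 : (r:ℝ)^r ≤ (4:ℝ)^r * r.factorial := by
      have := pow_self_le_four_pow_mul_factorial r
      calc (r:ℝ)^r = ((r^r : ℕ) : ℝ) := by push_cast; ring
        _ ≤ ((4^r * r.factorial : ℕ) : ℝ) := by exact_mod_cast this
        _ = (4:ℝ)^r * r.factorial := by push_cast; ring
    have h3 : (r:ℝ)^(2*m - r) ≤ (m:ℝ)^(2*m - r) :=
      pow_le_pow_left₀ (by positivity) (by exact_mod_cast hrm) _
    calc (r:ℝ)^(2*m) = (r:ℝ)^r * (r:ℝ)^(2*m - r) := h1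
      _ ≤ ((4:ℝ)^r * r.factorial) * (m:ℝ)^(2*m - r) :=
          mul_le_mul h2 h3 (by positivity) (by positivity)
  have key2 : (4:ℝ)^m * (m:ℝ)^(2*m - r) * E^r * 2^m ≤ (4*m*E)^m * 2^r := by
    have hEm : E^r * ((2:ℝ)^(m-r) * (m:ℝ)^(m-r)) ≤ E^m := by
      have h4 : ((2*m : ℝ))^(m - r) ≤ E^(m-r) :=
        pow_le_pow_left₀ (by positivity) hE _
      calc E^r * ((2:ℝ)^(m-r) * (m:ℝ)^(m-r)) = E^r * ((2*m : ℝ))^(m-r) := by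
            rw [mul_pow]
        _ ≤ E^r * E^(m-r) := by
            exact mul_le_mul_of_nonneg_left h4 (by positivity)
        _ = E^m := by rw [← pow_add]; congr 1; omega
    calc (4:ℝ)^m * (m:ℝ)^(2*m - r) * E^r * 2^m
        = (4:ℝ)^m * ((m:ℝ)^m * (m:ℝ)^(m - r)) * E^r * ((2:ℝ)^(m-r) * 2^r) := by
          rw [← pow_add, ← pow_add]
          congr 3
          · congr 1; omega
          · omega
      _ = ((4:ℝ)^m * (m:ℝ)^m * (E^r * ((2:ℝ)^(m-r) * (m:ℝ)^(m-r)))) * 2^r := by ring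
      _ ≤ ((4:ℝ)^m * (m:ℝ)^m * E^m) * 2^r := by
          apply mul_le_mul_of_nonneg_right _ (by positivity)
          exact mul_le_mul_of_nonneg_left hEm (by positivity)
      _ = (4*m*E)^m * 2^r := by rw [mul_pow, mul_pow]
  calc (r:ℝ)^(2*m) * V^r * 2^m
      ≤ ((4:ℝ)^r * r.factorial * (m:ℝ)^(2*m - r)) * E^r * 2^m := by
        apply mul_le_mul_of_nonneg_right _ (by positivity)
        exact mul_le_mul key1 (pow_le_pow_left₀ hV0 hVE r) (by positivity) (by positivity)
    _ ≤ ((4:ℝ)^m * r.factorial * (m:ℝ)^(2*m - r)) * E^r * 2^m := by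
        have : (4:ℝ)^r ≤ (4:ℝ)^m := pow_le_pow_right₀ (by norm_num) hrm
        apply mul_le_mul_of_nonneg_right _ (by positivity)
        apply mul_le_mul_of_nonneg_right _ (by positivity)
        apply mul_le_mul_of_nonneg_right _ (by positivity)
        exact mul_le_mul_of_nonneg_right this (by positivity)
    _ = ((4:ℝ)^m * (m:ℝ)^(2*m - r) * E^r * 2^m) * r.factorial := by ring
    _ ≤ ((4*m*E)^m * 2^r) * r.factorial := by
        exact mul_le_mul_of_nonneg_right key2 (by positivity)
    _ = (4*m*E)^m * 2^r * r.factorial := by ring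

lemma sum_term_bound (m : ℕ) (hm : 1 ≤ m) (E V : ℝ)
    (hV0 : 0 ≤ V) (hVE : V ≤ E) (hE : (2*m : ℝ) ≤ E) :
    ∑ r ∈ Finset.Icc 1 m, (r:ℝ)^(2*m) / r.factorial * V ^ r ≤ 2 * (4*m*E)^m := by
  have hE0 : (0:ℝ) ≤ E := le_trans (by positivity) hE
  have h1 : ∑ r ∈ Finset.Icc 1 m, (r:ℝ)^(2*m) / r.factorial * V ^ r
      ≤ ∑ r ∈ Finset.Icc 1 m, (4*m*E)^m * 2^r / 2^m := by
    apply Finset.sum_le_sum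
    intro r hr
    rw [Finset.mem_Icc] at hr
    exact term_bound m r hr.1 hr.2 E V hV0 hVE hE
  have h2 : ∑ r ∈ Finset.Icc 1 m, ((4*m*E)^m * 2^r / 2^m : ℝ)
      = (4*m*E)^m / 2^m * ∑ r ∈ Finset.Icc 1 m, (2:ℝ)^r := by
    rw [Finset.mul_sum]; apply Finset.sum_congr rfl; intro r _; ring
  have h3 : ∑ r ∈ Finset.Icc 1 m, (2:ℝ)^r ≤ 2^(m+1) := by
    calc ∑ r ∈ Finset.Icc 1 m, (2:ℝ)^r
        ≤ ∑ r ∈ Finset.range (m+1), (2:ℝ)^r := by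
          apply Finset.sum_le_sum_of_subset_of_nonneg
          · intro r hr
            rw [Finset.mem_Icc] at hr; rw [Finset.mem_range]; omega
          · intro r _ _; positivity
      _ = 2^(m+1) - 1 := by
          rw [geom_sum_eq (by norm_num)]; norm_num
      _ ≤ 2^(m+1) := by norm_num
  calc ∑ r ∈ Finset.Icc 1 m, (r:ℝ)^(2*m) / r.factorial * V ^ r
      ≤ (4*m*E)^m / 2^m * ∑ r ∈ Finset.Icc 1 m, (2:ℝ)^r := by rw [← h2]; exact h1
    _ ≤ (4*m*E)^m / 2^m * 2^(m+1) := by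
        apply mul_le_mul_of_nonneg_left h3 (by positivity)
    _ = 2 * (4*m*E)^m := by
        rw [pow_succ]; field_simp

-- count of injective maps with prescribed image
lemma factorial_le_card_inj {n r : ℕ} (B : Finset (Fin n)) (hB : B.card = r) :
    (r.factorial : ℕ) ≤ (univ.filter (fun g : Fin r → Fin n =>
      Function.Injective g ∧ image g univ = B)).card := by
  classical
  let e : Fin r → Fin n := fun j => ↑(B.orderIsoOfFin hB j)
  have he_inj : Function.Injective e := fun a b hab => by
    apply (B.orderIsoOfFin hB).injective
    exact Subtype.ext hab
  have he_im : image e univ = B := by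
    apply Finset.eq_of_subset_of_card_le
    · intro i hi
      rw [mem_image] at hi
      obtain ⟨j, _, hj⟩ := hi
      rw [← hj]; exact (B.orderIsoOfFin hB j).2
    · rw [card_image_of_injective _ he_inj, card_univ, Fintype.card_fin, hB]
  have : (univ : Finset (Equiv.Perm (Fin r))).card ≤ (univ.filter (fun g : Fin r → Fin n =>
      Function.Injective g ∧ image g univ = B)).card := by
    apply Finset.card_le_card_of_injOn (fun σ : Equiv.Perm (Fin r) => e ∘ σ)
    · intro σ _
      rw [mem_coe, mem_filter]
      refine ⟨mem_univ _, he_inj.comp σ.injective, ?_⟩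
      rw [← he_im, show image (e ∘ σ) univ = image e (image (⇑σ) univ) from
        (Finset.image_image).symm, Finset.image_univ_equiv]
    · intro σ _ τ _ h
      apply Equiv.ext
      intro j
      exact he_inj (congrFun h j)
  calc r.factorial = (univ : Finset (Equiv.Perm (Fin r))).card := by
        rw [card_univ, Fintype.card_perm, Fintype.card_fin]
    _ ≤ _ := this

lemma comb_bound (n k m : ℕ) (hk : k = 2*m) (hk0 : 0 < k) (v : Fin n → ℝ)
    (hv : ∀ i, 0 ≤ v i) :
    ∑ f ∈ univ.filter (fun f : Fin k → Fin n =>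
        ∀ i ∈ image f univ, 2 ≤ (univ.filter (fun j => f j = i)).card),
      ∏ i ∈ image f univ, v i
    ≤ ∑ r ∈ Finset.Icc 1 m, (r:ℝ)^k / r.factorial * (∑ i, v i)^r := by
  classical
  set V := ∑ i, v i with hV
  set A := univ.filter (fun f : Fin k → Fin n =>
        ∀ i ∈ image f univ, 2 ≤ (univ.filter (fun j => f j = i)).card) with hA
  have hmaps : ∀ f ∈ A, (image f univ).card ∈ Finset.Icc 1 m := by
    intro f hf
    rw [hA, mem_filter] at hf
    have hcard : k = ∑ i ∈ image f univ, (univ.filter (fun j => f j = i)).card := by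
      have := Finset.card_eq_sum_card_fiberwise
        (fun j (_ : j ∈ (univ : Finset (Fin k))) => mem_image_of_mem f (mem_univ j))
      rw [← this, card_univ, Fintype.card_fin]
    have h2 : 2 * (image f univ).card ≤ k := by
      have hs : ∑ _i ∈ image f univ, 2 ≤
          ∑ i ∈ image f univ, (univ.filter (fun j => f j = i)).card :=
        Finset.sum_le_sum hf.2
      rw [Finset.sum_const, smul_eq_mul] at hs
      omega
    have h1 : (image f univ).Nonempty := by
      apply Finset.Nonempty.image
      exact ⟨⟨0, hk0⟩, mem_univ _⟩
    rw [Finset.mem_Icc]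
    constructor
    · exact Finset.card_pos.2 h1
    · omega
  rw [← Finset.sum_fiberwise_of_maps_to hmaps (fun f => ∏ i ∈ image f univ, v i)]
  apply Finset.sum_le_sum
  intro r hr
  rw [Finset.mem_Icc] at hr
  have hrfac : (0:ℝ) < r.factorial := by positivity
  rw [div_mul_eq_mul_div, le_div_iff₀ hrfac]
  -- goal : (∑ f ∈ A.filter ..., ∏ ...) * r! ≤ r^k * V^r
  set Ar := A.filter (fun f => (image f univ).card = r) with hAr
  have hvB : ∀ B : Finset (Fin n), (0:ℝ) ≤ ∏ i ∈ B, v i :=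
    fun B => Finset.prod_nonneg (fun i _ => hv i)
  have step1 : ∀ f ∈ Ar, (∏ i ∈ image f univ, v i) * r.factorial ≤
      ∑ g ∈ univ.filter (fun g : Fin r → Fin n =>
        Function.Injective g ∧ image g univ = image f univ), ∏ j, v (g j) := by
    intro f hf
    rw [hAr, mem_filter] at hf
    have hcardB : (image f univ).card = r := hf.2
    have hconst : ∀ g ∈ univ.filter (fun g : Fin r → Fin n =>
        Function.Injective g ∧ image g univ = image f univ),
        (∏ j, v (g j)) = ∏ i ∈ image f univ, v i := by
      intro g hg
      rw [mem_filter] at hg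
      rw [← hg.2.2]
      exact (Finset.prod_image (fun a _ b _ h => hg.2.1 h)).symm
    rw [Finset.sum_congr rfl hconst, Finset.sum_const, nsmul_eq_mul,
      mul_comm (∏ i ∈ image f univ, v i) (r.factorial : ℝ)]
    apply mul_le_mul_of_nonneg_right _ (hvB _)
    exact_mod_cast factorial_le_card_inj (image f univ) hcardB
  calc (∑ f ∈ Ar, ∏ i ∈ image f univ, v i) * r.factorial
      = ∑ f ∈ Ar, (∏ i ∈ image f univ, v i) * r.factorial := by
        rw [Finset.sum_mul]
    _ ≤ ∑ f ∈ Ar, ∑ g ∈ univ.filter (fun g : Fin r → Fin n =>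
          Function.Injective g ∧ image g univ = image f univ), ∏ j, v (g j) :=
        Finset.sum_le_sum step1
    _ = ∑ g ∈ univ.filter (fun g : Fin r → Fin n => Function.Injective g),
          ∑ f ∈ Ar.filter (fun f => image f univ = image g univ), ∏ j, v (g j) := by
        apply Finset.sum_comm'
        intro f g
        simp only [mem_filter, mem_univ, true_and]
        constructor
        · rintro ⟨hf, hginj, him⟩
          exact ⟨⟨hf, him.symm⟩, hginj⟩
        · rintro ⟨⟨hf, him⟩, hginj⟩
          exact ⟨hf, hginj, him.symm⟩
    _ ≤ ∑ g ∈ univ.filter (fun g : Fin r → Fin n => Function.Injective g),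
          (r:ℝ)^k * ∏ j, v (g j) := by
        apply Finset.sum_le_sum
        intro g hg
        rw [mem_filter] at hg
        have hprodnn : (0:ℝ) ≤ ∏ j, v (g j) := Finset.prod_nonneg (fun j _ => hv _)
        rw [Finset.sum_const, nsmul_eq_mul]
        apply mul_le_mul_of_nonneg_right _ hprodnn
        -- card of fiber ≤ r^k
        have hsub : Ar.filter (fun f => image f univ = image g univ) ⊆
            Fintype.piFinset (fun _ : Fin k => image g univ) := by
          intro f hf
          rw [mem_filter] at hf
          rw [Fintype.mem_piFinset]
          intro j
          rw [← hf.2]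
          exact mem_image_of_mem f (mem_univ j)
        have hcardg : (image g univ).card = r := by
          rw [Finset.card_image_of_injective _ hg.2, card_univ, Fintype.card_fin]
        calc ((Ar.filter (fun f => image f univ = image g univ)).card : ℝ)
            ≤ ((Fintype.piFinset (fun _ : Fin k => image g univ)).card : ℝ) := by
              exact_mod_cast Finset.card_le_card hsub
          _ = (r:ℝ)^k := by
              rw [Fintype.card_piFinset]
              simp [hcardg]
    _ ≤ (r:ℝ)^k * V^r := by
        rw [← Finset.mul_sum]
        apply mul_le_mul_of_nonneg_left _ (by positivity)
        calc ∑ g ∈ univ.filter (fun g : Fin r → Fin n => Function.Injective g),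
              ∏ j, v (g j)
            ≤ ∑ g : Fin r → Fin n, ∏ j, v (g j) := by
              apply Finset.sum_le_sum_of_subset_of_nonneg (Finset.filter_subset _ _)
              intro g _ _
              exact Finset.prod_nonneg (fun j _ => hv _)
          _ = V^r := (Fintype.sum_pow v r).symm


section helpers
variable {Ω : Type*} [MeasurableSpace Ω] {P : Measure Ω} [IsProbabilityMeasure P]

lemma my_integrable_of_bound (f : Ω → ℝ) (C : ℝ) (hm : Measurable f)
    (hb : ∀ ω, |f ω| ≤ C) : Integrable f P := by
  apply (integrable_const C).mono' hm.aestronglyMeasurable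
  exact ae_of_all _ (fun ω => by rw [Real.norm_eq_abs]; exact hb ω)


lemma integral_indep_prod {ι : Type*} (f : ι → Ω → ℝ) (hmeas : ∀ i, Measurable (f i))
    (hb : ∀ i ω, |f i ω| ≤ 1)
    (hind : iIndepFun f P) (s : Finset ι) :
    ∫ ω, ∏ i ∈ s, f i ω ∂P = ∏ i ∈ s, ∫ ω, f i ω ∂P := by
  classical
  have hprodb : ∀ (t : Finset ι) ω, |∏ j ∈ t, f j ω| ≤ 1 := by
    intro t ω
    rw [Finset.abs_prod]
    apply Finset.prod_le_one (fun j _ => abs_nonneg _) (fun j _ => hb j ω)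
  have hint : ∀ (t : Finset ι), Integrable (fun ω => ∏ j ∈ t, f j ω) P := by
    intro t
    exact my_integrable_of_bound _ 1
      (Finset.measurable_prod t (fun j _ => hmeas j)) (hprodb t)
  induction s using Finset.induction_on with
  | empty => simp
  | @insert i s hi ih =>
    have hIndep2 : IndepFun (∏ j ∈ s, f j) (f i) P :=
      hind.indepFun_finsetProd_of_notMem hmeas hi
    have hintP : Integrable (∏ j ∈ s, f j) P := by
      have := hint s
      convert this using 1
      funext ω
      simp [Finset.prod_apply]
    calc ∫ ω, ∏ j ∈ insert i s, f j ω ∂P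
        = ∫ ω, ((∏ j ∈ s, f j) * f i) ω ∂P := by
          apply integral_congr_ae
          apply ae_of_all
          intro ω
          simp [Finset.prod_insert hi, Finset.prod_apply, mul_comm]
      _ = (∫ ω, (∏ j ∈ s, f j) ω ∂P) * ∫ ω, f i ω ∂P :=
          hIndep2.integral_mul_eq_mul_integral hintP.aestronglyMeasurable (my_integrable_of_bound _ 1 (hmeas i) (hb i)).aestronglyMeasurable
      _ = (∏ j ∈ s, ∫ ω, f j ω ∂P) * ∫ ω, f i ω ∂P := by
          rw [← ih]
          congr 1
          apply integral_congr_ae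
          apply ae_of_all
          intro ω
          simp [Finset.prod_apply]
      _ = ∏ j ∈ insert i s, ∫ ω, f j ω ∂P := by
          rw [Finset.prod_insert hi, mul_comm]

end helpers

/-- **Bellare–Rompel tail bound.** Let `k ≥ 4` be an even integer and `X₁, …, Xₙ` be `k`-wise
independent random variables taking values in `[0,1]`. Let `X = X₁ + ⋯ + Xₙ` and let `μ` be a
real number with `μ ≤ E[X]` and `μ ≥ k`. Then for every `ε > 0`,
`Pr[|X − E[X]| ≥ ε·E[X]] ≤ 8·(2k/(ε²·μ))^(k/2)`. -/
theorem bellare_rompel {Ω : Type*} [MeasurableSpace Ω] (P : Measure Ω) [IsProbabilityMeasure P]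
    (n k : ℕ) (hk4 : 4 ≤ k) (hkeven : Even k)
    (X : Fin n → Ω → ℝ) (hXmeas : ∀ i, Measurable (X i))
    (hXrange : ∀ i ω, X i ω ∈ Set.Icc (0 : ℝ) 1)
    (hindep : KWiseIndepFun k X P)
    (μ : ℝ) (hμle : μ ≤ ∫ ω, (∑ i, X i ω) ∂P) (hμk : (k : ℝ) ≤ μ)
    (ε : ℝ) (hε : 0 < ε) :
    (P {ω | ε * (∫ ω', (∑ i, X i ω') ∂P) ≤ |(∑ i, X i ω) - ∫ ω', (∑ i, X i ω') ∂P|}).toReal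
      ≤ 8 * (2 * k / (ε ^ 2 * μ)) ^ ((k : ℝ) / 2) := by
  classical
  obtain ⟨m, hm2⟩ := hkeven
  have hk2m : k = 2*m := by omega
  have hm2' : 2 ≤ m := by omega
  set E' := ∫ ω, (∑ i, X i ω) ∂P with hE'def
  set c : Fin n → ℝ := fun i => ∫ ω, X i ω ∂P with hcdef
  set Y : Fin n → Ω → ℝ := fun i ω => X i ω - c i with hYdef
  have hXint : ∀ i, Integrable (X i) P := fun i =>
    my_integrable_of_bound _ 1 (hXmeas i)
      (fun ω => abs_le.2 ⟨by linarith [(hXrange i ω).1], (hXrange i ω).2⟩)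
  have hc0 : ∀ i, 0 ≤ c i := fun i => integral_nonneg (fun ω => (hXrange i ω).1)
  have hc1 : ∀ i, c i ≤ 1 := by
    intro i
    calc c i ≤ ∫ _ω, (1:ℝ) ∂P :=
        integral_mono (hXint i) (integrable_const 1) (fun ω => (hXrange i ω).2)
      _ = 1 := by simp
  have hYmeas : ∀ i, Measurable (Y i) := fun i => (hXmeas i).sub measurable_const
  have hYb : ∀ i ω, |Y i ω| ≤ 1 := fun i ω => abs_le.2
    ⟨by simp only [hYdef]; linarith [(hXrange i ω).1, hc1 i],
     by simp only [hYdef]; linarith [(hXrange i ω).2, hc0 i]⟩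
  have hY0 : ∀ i, ∫ ω, Y i ω ∂P = 0 := by
    intro i
    simp only [hYdef]
    rw [integral_sub (hXint i) (integrable_const _)]
    simp [hcdef]
  have hE'sum : E' = ∑ i, c i := by
    rw [hE'def]
    exact integral_finset_sum univ (fun i _ => hXint i)
  have hE'mu : μ ≤ E' := hμle
  have hE'pos : 0 < E' := by
    have : (0:ℝ) < k := by exact_mod_cast (by omega : 0 < k)
    linarith
  set S : Ω → ℝ := fun ω => ∑ i, Y i ω with hSdef
  have hSeq : ∀ ω, S ω = (∑ i, X i ω) - E' := by
    intro ω
    simp only [hSdef, hYdef, Finset.sum_sub_distrib, hE'sum]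
  set v : Fin n → ℝ := fun i => ∫ ω, (Y i ω)^2 ∂P with hvdef
  have hv0 : ∀ i, 0 ≤ v i := fun i => integral_nonneg (fun ω => sq_nonneg _)
  have hYeint : ∀ (i) (e : ℕ), Integrable (fun ω => (Y i ω)^e) P := fun i e =>
    my_integrable_of_bound _ 1 ((hYmeas i).pow_const e)
      (fun ω => by rw [abs_pow]; exact pow_le_one₀ (abs_nonneg _) (hYb i ω))
  have hvc : ∀ i, v i ≤ c i := by
    intro i
    have hpt : ∀ ω, (Y i ω)^2 ≤ (1 - 2*c i) * X i ω + c i^2 := by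
      intro ω
      have h1 := (hXrange i ω).1
      have h2 := (hXrange i ω).2
      have hsq : X i ω^2 ≤ X i ω := by nlinarith
      simp only [hYdef]
      nlinarith
    have hint1 : Integrable (fun ω => (1 - 2*c i) * X i ω) P := (hXint i).const_mul _
    have hRint : Integrable (fun ω => (1 - 2*c i) * X i ω + c i^2) P :=
      hint1.add (integrable_const _)
    calc v i ≤ ∫ ω, ((1 - 2*c i) * X i ω + c i^2) ∂P :=
        integral_mono (hYeint i 2) hRint hpt
      _ = (1 - 2*c i) * c i + c i^2 := by
          rw [integral_add hint1 (integrable_const _), integral_const_mul]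
          simp [hcdef]
      _ ≤ c i := by nlinarith [sq_nonneg (c i)]
  have hVnn : 0 ≤ ∑ i, v i := Finset.sum_nonneg (fun i _ => hv0 i)
  have hVE : (∑ i, v i) ≤ E' := by
    rw [hE'sum]; exact Finset.sum_le_sum (fun i _ => hvc i)
  -- expansion of the integral of a product over a function f
  have hexp : ∀ f : Fin k → Fin n,
      ∫ ω, ∏ j, Y (f j) ω ∂P
        = ∏ i ∈ image f univ, ∫ ω, (Y i ω)^((univ.filter (fun j => f j = i)).card) ∂P := by
    intro f
    have hBk : (image f univ).card ≤ k :=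
      le_trans card_image_le (by rw [card_univ, Fintype.card_fin])
    have hptw : ∀ ω, ∏ j, Y (f j) ω
        = ∏ i ∈ image f univ, (Y i ω)^((univ.filter (fun j => f j = i)).card) := by
      intro ω
      exact Finset.prod_comp (fun i => Y i ω) f
    have hindB := hindep (image f univ) hBk
    have hcomp : iIndepFun
        (fun i : (image f univ : Finset (Fin n)) =>
          fun ω => (Y i ω)^((univ.filter (fun j => f j = (i:Fin n))).card)) P := by
      have := hindB.comp
        (fun i : (image f univ : Finset (Fin n)) =>
          fun x : ℝ => (x - c i)^((univ.filter (fun j => f j = (i:Fin n))).card))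
        (fun i => (measurable_id.sub_const _).pow_const _)
      exact this
    have hmain := integral_indep_prod
      (fun i : (image f univ : Finset (Fin n)) =>
        fun ω => (Y i ω)^((univ.filter (fun j => f j = (i:Fin n))).card))
      (fun i => (hYmeas i).pow_const _)
      (fun i ω => by rw [abs_pow]; exact pow_le_one₀ (abs_nonneg _) (hYb i ω))
      hcomp Finset.univ
    have hsub : ∀ (g : Fin n → ℝ),
        (∏ i : (image f univ : Finset (Fin n)), g ↑i) = ∏ i ∈ image f univ, g i := by
      intro g
      rw [Finset.univ_eq_attach]
      exact Finset.prod_attach _ g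
    have hfun : (fun ω => ∏ j, Y (f j) ω)
        = (fun ω => ∏ i : (image f univ : Finset (Fin n)),
            (Y (↑i) ω)^((univ.filter (fun j => f j = (i:Fin n))).card)) := by
      funext ω
      rw [hptw ω, ← hsub (fun i => (Y i ω)^((univ.filter (fun j => f j = i)).card))]
    rw [hfun, hmain, hsub (fun i => ∫ ω, (Y i ω)^((univ.filter (fun j => f j = i)).card) ∂P)]
  -- moment formula
  have hprodint : ∀ f : Fin k → Fin n, Integrable (fun ω => ∏ j, Y (f j) ω) P := by
    intro f
    apply my_integrable_of_bound _ 1 (Finset.measurable_prod _ (fun j _ => hYmeas _))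
    intro ω
    rw [Finset.abs_prod]
    exact Finset.prod_le_one (fun _ _ => abs_nonneg _) (fun j _ => hYb _ ω)
  have hSmeas : Measurable S := Finset.measurable_sum _ (fun i _ => hYmeas i)
  have hSb : ∀ ω, |S ω| ≤ n := by
    intro ω
    calc |S ω| ≤ ∑ i, |Y i ω| := Finset.abs_sum_le_sum_abs _ _
      _ ≤ ∑ _i : Fin n, (1:ℝ) := Finset.sum_le_sum (fun i _ => hYb i ω)
      _ = n := by simp
  have hSkint : Integrable (fun ω => (S ω)^k) P := by
    apply my_integrable_of_bound _ ((n:ℝ)^k) (hSmeas.pow_const k)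
    intro ω
    rw [abs_pow]
    exact pow_le_pow_left₀ (abs_nonneg _) (hSb ω) k
  have hmom : ∫ ω, (S ω)^k ∂P
      = ∑ f : Fin k → Fin n, ∏ i ∈ image f univ,
          ∫ ω, (Y i ω)^((univ.filter (fun j => f j = i)).card) ∂P := by
    have h1 : (fun ω => (S ω)^k) = fun ω => ∑ f : Fin k → Fin n, ∏ j, Y (f j) ω := by
      funext ω
      show (∑ i, Y i ω)^k = _
      exact Fintype.sum_pow (fun i => Y i ω) k
    rw [h1, integral_finset_sum _ (fun f _ => hprodint f)]
    exact Finset.sum_congr rfl (fun f _ => hexp f)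
  have hgoodsum : ∑ f : Fin k → Fin n, ∏ i ∈ image f univ,
          ∫ ω, (Y i ω)^((univ.filter (fun j => f j = i)).card) ∂P
      = ∑ f ∈ univ.filter (fun f : Fin k → Fin n =>
          ∀ i ∈ image f univ, 2 ≤ (univ.filter (fun j => f j = i)).card),
          ∏ i ∈ image f univ, ∫ ω, (Y i ω)^((univ.filter (fun j => f j = i)).card) ∂P := by
    symm
    apply Finset.sum_filter_of_ne
    intro f _ hne i hi
    by_contra hlt
    push_neg at hlt
    have hpos : 0 < (univ.filter (fun j => f j = i)).card := by
      rw [Finset.card_pos]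
      rw [Finset.mem_image] at hi
      obtain ⟨j, _, hj⟩ := hi
      exact ⟨j, Finset.mem_filter.2 ⟨Finset.mem_univ _, hj⟩⟩
    have hone : (univ.filter (fun j => f j = i)).card = 1 := by omega
    apply hne
    apply Finset.prod_eq_zero hi
    rw [hone]
    simp only [pow_one]
    exact hY0 i
  have habs : (∑ f ∈ univ.filter (fun f : Fin k → Fin n =>
          ∀ i ∈ image f univ, 2 ≤ (univ.filter (fun j => f j = i)).card),
          ∏ i ∈ image f univ, ∫ ω, (Y i ω)^((univ.filter (fun j => f j = i)).card) ∂P)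
      ≤ ∑ f ∈ univ.filter (fun f : Fin k → Fin n =>
          ∀ i ∈ image f univ, 2 ≤ (univ.filter (fun j => f j = i)).card),
          ∏ i ∈ image f univ, v i := by
    apply Finset.sum_le_sum
    intro f hf
    rw [Finset.mem_filter] at hf
    calc (∏ i ∈ image f univ, ∫ ω, (Y i ω)^((univ.filter (fun j => f j = i)).card) ∂P)
        ≤ |∏ i ∈ image f univ, ∫ ω, (Y i ω)^((univ.filter (fun j => f j = i)).card) ∂P| :=
          le_abs_self _
      _ = ∏ i ∈ image f univ,
            |∫ ω, (Y i ω)^((univ.filter (fun j => f j = i)).card) ∂P| := Finset.abs_prod _ _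
      _ ≤ ∏ i ∈ image f univ, v i := by
        apply Finset.prod_le_prod (fun i _ => abs_nonneg _)
        intro i hi
        have he2 : 2 ≤ (univ.filter (fun j => f j = i)).card := hf.2 i hi
        calc |∫ ω, (Y i ω)^((univ.filter (fun j => f j = i)).card) ∂P|
            ≤ ∫ ω, |(Y i ω)^((univ.filter (fun j => f j = i)).card)| ∂P := by
              have := norm_integral_le_integral_norm
                (fun ω => (Y i ω)^((univ.filter (fun j => f j = i)).card)) (μ := P)
              simpa [Real.norm_eq_abs] using this
          _ ≤ ∫ ω, (Y i ω)^2 ∂P := by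
              apply integral_mono (hYeint i _).abs (hYeint i 2)
              intro ω
              show |Y i ω ^ ((univ.filter (fun j => f j = i)).card)| ≤ Y i ω ^ 2
              rw [abs_pow]
              calc |Y i ω|^((univ.filter (fun j => f j = i)).card)
                  ≤ |Y i ω|^2 := pow_le_pow_of_le_one (abs_nonneg _) (hYb i ω) he2
                _ = (Y i ω)^2 := sq_abs _
          _ = v i := rfl
  have hE2m : (2*(m:ℝ)) ≤ E' := by
    have hcast : ((k:ℕ):ℝ) = 2*(m:ℝ) := by rw [hk2m]; push_cast; ring
    linarith [hμk, hμle]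
  have hSk_le : ∫ ω, (S ω)^k ∂P ≤ 2*(4*m*E')^m := by
    have hcomb := comb_bound n k m hk2m (by omega) v hv0
    have hnum := sum_term_bound m (by omega) E' (∑ i, v i) hVnn hVE hE2m
    have hrw : ∑ r ∈ Finset.Icc 1 m, (r:ℝ)^k / r.factorial * (∑ i, v i)^r
        = ∑ r ∈ Finset.Icc 1 m, (r:ℝ)^(2*m) / r.factorial * (∑ i, v i)^r := by
      rw [hk2m]
    calc ∫ ω, (S ω)^k ∂P
        = ∑ f ∈ univ.filter (fun f : Fin k → Fin n =>
            ∀ i ∈ image f univ, 2 ≤ (univ.filter (fun j => f j = i)).card),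
            ∏ i ∈ image f univ, ∫ ω, (Y i ω)^((univ.filter (fun j => f j = i)).card) ∂P := by
          rw [hmom, hgoodsum]
      _ ≤ ∑ f ∈ univ.filter (fun f : Fin k → Fin n =>
            ∀ i ∈ image f univ, 2 ≤ (univ.filter (fun j => f j = i)).card),
            ∏ i ∈ image f univ, v i := habs
      _ ≤ ∑ r ∈ Finset.Icc 1 m, (r:ℝ)^k / r.factorial * (∑ i, v i)^r := hcomb
      _ = ∑ r ∈ Finset.Icc 1 m, (r:ℝ)^(2*m) / r.factorial * (∑ i, v i)^r := hrw
      _ ≤ 2*(4*m*E')^m := hnum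
  -- Markov
  have ha : 0 < ε * E' := mul_pos hε hE'pos
  have hak : 0 < (ε*E')^k := pow_pos ha k
  have hkeven' : Even k := ⟨m, hm2⟩
  have hsub2 : {ω | ε * E' ≤ |(∑ i, X i ω) - E'|} ⊆ {ω | (ε*E')^k ≤ (S ω)^k} := by
    intro ω hω
    simp only [Set.mem_setOf_eq] at hω ⊢
    have h1 : (ε*E')^k ≤ |S ω|^k := by
      apply pow_le_pow_left₀ ha.le
      rw [hSeq ω]
      exact hω
    rwa [hkeven'.pow_abs] at h1
  have hmarkov := mul_meas_ge_le_integral_of_nonneg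
      (ae_of_all _ (fun ω => hkeven'.pow_nonneg (S ω))) hSkint ((ε*E')^k)
  have hfinal1 : (P {ω | ε * E' ≤ |(∑ i, X i ω) - E'|}).toReal
      ≤ (∫ ω, (S ω)^k ∂P) / (ε*E')^k := by
    rw [le_div_iff₀ hak]
    calc (P {ω | ε * E' ≤ |(∑ i, X i ω) - E'|}).toReal * (ε*E')^k
        ≤ (P {ω | (ε*E')^k ≤ (S ω)^k}).toReal * (ε*E')^k := by
          apply mul_le_mul_of_nonneg_right _ hak.le
          exact ENNReal.toReal_mono (measure_ne_top _ _) (measure_mono hsub2)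
      _ = (ε*E')^k * (P {ω | (ε*E')^k ≤ (S ω)^k}).toReal := mul_comm _ _
      _ ≤ ∫ ω, (S ω)^k ∂P := hmarkov
  have h2k0 : (0:ℝ) < 2*(k:ℝ) := by
    have : (0:ℝ) < (k:ℝ) := by exact_mod_cast (by omega : 0 < k)
    linarith
  have hμpos : 0 < μ := lt_of_lt_of_le (by exact_mod_cast (by omega : 0 < k) : (0:ℝ) < k) hμk
  have hbase : 2*(4*(m:ℝ)*E')^m / (ε*E')^k = 2 * ((2*(k:ℝ))/(ε^2*E'))^m := by
    have h4m : (4*(m:ℝ)*E') = (2*(k:ℝ))*E' := by rw [hk2m]; push_cast; ring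
    rw [h4m, hk2m, pow_mul, mul_div_assoc, ← div_pow]
    congr 2
    rw [mul_pow, show ε^2*E'^2 = (ε^2*E')*E' from by ring]
    rw [mul_div_mul_right _ _ hE'pos.ne']
  have hmono : 2*((2*(k:ℝ))/(ε^2*E'))^m ≤ 8 * ((2*(k:ℝ))/(ε^2*μ))^m := by
    have hb1 : (0:ℝ) ≤ 2*(k:ℝ)/(ε^2*E') := by positivity
    have hb2 : 2*(k:ℝ)/(ε^2*E') ≤ 2*(k:ℝ)/(ε^2*μ) := by
      apply div_le_div_of_nonneg_left h2k0.le (by positivity)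
      apply mul_le_mul_of_nonneg_left hμle (by positivity)
    calc 2*((2*(k:ℝ))/(ε^2*E'))^m ≤ 2*((2*(k:ℝ))/(ε^2*μ))^m := by
          exact mul_le_mul_of_nonneg_left (pow_le_pow_left₀ hb1 hb2 m) (by norm_num)
      _ ≤ 8 * ((2*(k:ℝ))/(ε^2*μ))^m := by
          apply mul_le_mul_of_nonneg_right (by norm_num) (by positivity)
  have hrpow : ((2*(k:ℝ))/(ε^2*μ))^((k:ℝ)/2) = ((2*(k:ℝ))/(ε^2*μ))^m := by
    have hc : ((k:ℝ)/2) = ((m:ℕ):ℝ) := by rw [hk2m]; push_cast; ring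
    rw [hc, Real.rpow_natCast]
  calc (P {ω | ε * E' ≤ |(∑ i, X i ω) - E'|}).toReal
      ≤ (∫ ω, (S ω)^k ∂P) / (ε*E')^k := hfinal1
    _ ≤ 2*(4*(m:ℝ)*E')^m / (ε*E')^k := by
        gcongr
    _ = 2 * ((2*(k:ℝ))/(ε^2*E'))^m := hbase
    _ ≤ 8 * ((2*(k:ℝ))/(ε^2*μ))^m := hmono
    _ = 8 * ((2*(k:ℝ))/(ε^2*μ))^((k:ℝ)/2) := by rw [hrpow]
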